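/- For all real t and integers n ≥ 1, ∑_{k=1}^∞ t^k / (k!(k-1)! Γ(n-k+3/2)) = (t / Γ(n+1/2)) · ₁F₁(1/2 - n, 2; -t), where 1/Γ at nonpositive integer arguments is interpreted as 0. -/

import Mathlib

/-- The Kummer confluent hypergeometric function `₁F₁(a, b; z)`. -/
noncomputable def hyp1F1 (a b z : ℝ) : ℝ :=
  ∑' k : ℕ, (ascPochhammer ℝ k).eval a / (ascPochhammer ℝ k).eval b *
    z ^ k / Nat.factorial k

lemma ascPochhammer_eval_prod (x : ℝ) (k : ℕ) :
    (ascPochhammer ℝ k).eval x = ∏ i ∈ Finset.range k, (x + i) := by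
  induction k with
  | zero => simp
  | succ k ih =>
    rw [ascPochhammer_succ_right, Finset.prod_range_succ, ← ih]
    simp [Polynomial.eval_mul]

lemma ascPochhammer_two_eval (k : ℕ) :
    (ascPochhammer ℝ k).eval 2 = Nat.factorial (k + 1) := by
  induction k with
  | zero => simp
  | succ k ih =>
    rw [ascPochhammer_succ_right, Polynomial.eval_mul, ih]
    push_cast [Nat.factorial_succ]
    simp
    ring

lemma half_ne (n k : ℕ) : ((n : ℝ) - k + 1 / 2) ≠ 0 := by
  intro h
  have h2 : ((2 * n + 1 : ℕ) : ℝ) = ((2 * k : ℕ) : ℝ) := by push_cast; linarith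
  have := Nat.cast_injective (R := ℝ) h2
  omega

lemma gamma_half_ne (n k : ℕ) : Real.Gamma ((n : ℝ) - k + 1 / 2) ≠ 0 := by
  apply Real.Gamma_ne_zero
  intro m h
  have h2 : ((2 * n + 1 + 2 * m : ℕ) : ℝ) = ((2 * k : ℕ) : ℝ) := by push_cast; linarith
  have := Nat.cast_injective (R := ℝ) h2
  omega

lemma gamma_prod (n k : ℕ) :
    Real.Gamma ((n : ℝ) + 1 / 2) =
      (∏ i ∈ Finset.range k, ((n : ℝ) - 1 / 2 - i)) * Real.Gamma ((n : ℝ) - k + 1 / 2) := by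
  induction k with
  | zero => simp
  | succ k ih =>
    rw [ih, Finset.prod_range_succ]
    have h1 : ((n : ℝ) - k + 1 / 2) = ((n : ℝ) - (k + 1) + 1 / 2) + 1 := by ring
    have h2 := Real.Gamma_add_one (s := (n : ℝ) - (k + 1) + 1 / 2) (by
      have := half_ne n (k + 1)
      push_cast at this ⊢
      convert this using 2)
    rw [h1, h2]
    push_cast
    ring

/-- For `n ≥ 1` and real `t`:
`∑_{k=1}^∞ t^k / (k!(k-1)! Γ(n-k+3/2)) = (t/Γ(n+1/2)) ₁F₁(1/2-n, 2; -t)`. -/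
theorem tsum_eq_hyp1F1 (n : ℕ) (hn : 1 ≤ n) (t : ℝ) :
    ∑' k : ℕ, t ^ (k + 1) /
        (Nat.factorial (k + 1) * Nat.factorial k *
          Real.Gamma ((n : ℝ) - ((k : ℝ) + 1) + 3 / 2)) =
      t / Real.Gamma ((n : ℝ) + 1 / 2) * hyp1F1 (1 / 2 - (n : ℝ)) 2 (-t) := by
  rw [hyp1F1, ← tsum_mul_left]
  apply tsum_congr
  intro k
  have harg : (n : ℝ) - ((k : ℝ) + 1) + 3 / 2 = (n : ℝ) - k + 1 / 2 := by ring
  rw [harg, ascPochhammer_eval_prod, ascPochhammer_two_eval]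
  have hP : ∀ i ∈ Finset.range k, ((n : ℝ) - 1 / 2 - i) ≠ 0 := by
    intro i _
    have := half_ne n (i + 1)
    intro h; apply this; push_cast; linarith
  have hPne : (∏ i ∈ Finset.range k, ((n : ℝ) - 1 / 2 - i)) ≠ 0 :=
    Finset.prod_ne_zero_iff.mpr hP
  have hsign : (∏ i ∈ Finset.range k, (1 / 2 - (n : ℝ) + i)) =
      (-1) ^ k * ∏ i ∈ Finset.range k, ((n : ℝ) - 1 / 2 - i) := by
    rw [show ((-1 : ℝ)) ^ k = ∏ _i ∈ Finset.range k, (-1 : ℝ) by simp,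
      ← Finset.prod_mul_distrib]
    exact Finset.prod_congr rfl fun i _ => by ring
  rw [hsign, gamma_prod n k, neg_pow]
  have hG := gamma_half_ne n k
  have hf1 : (Nat.factorial (k + 1) : ℝ) ≠ 0 := by positivity
  have hf2 : (Nat.factorial k : ℝ) ≠ 0 := by positivity
  set P := ∏ i ∈ Finset.range k, ((n : ℝ) - 1 / 2 - i) with hPdef
  set G := Real.Gamma ((n : ℝ) - k + 1 / 2) with hGdef
  have hone : ((-1 : ℝ)) ^ (k * 2) = 1 := Even.neg_one_pow ⟨k, by ring⟩
  field_simp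
  linear_combination (-(t * t ^ k)) * hone
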